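/- For any nonzero antisymmetric vector ψ in H ⊗ H (H a finite-dimensional complex Hilbert space), there exist orthogonal projections E₁, E₂ on H with E₁E₂ = 0 and (E₁⊗E₂ + E₂⊗E₁)ψ = ψ. -/

import Mathlib

open scoped TensorProduct InnerProductSpace ComplexConjugate
open Module

universe u

section Aux

variable {H : Type*} [NormedAddCommGroup H] [InnerProductSpace ℂ H]

noncomputable def Fc (ψ : H ⊗[ℂ] H) (x : H) : H :=
  TensorProduct.lid ℂ H (LinearMap.rTensor H ((innerSL ℂ x).toLinearMap) ψ)

lemma Fc_tmul (a b x : H) : Fc (a ⊗ₜ[ℂ] b) x = ⟪x, a⟫_ℂ • b := by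
  simp [Fc]

lemma Fc_expand {ι : Type*} [Fintype ι] (b : OrthonormalBasis ι ℂ H) (ψ : H ⊗[ℂ] H) :
    ψ = ∑ p : ι, ∑ q : ι, ⟪b q, Fc ψ (b p)⟫_ℂ • (b p ⊗ₜ[ℂ] b q) := by
  induction ψ using TensorProduct.induction_on with
  | zero => simp [Fc]
  | tmul x y =>
    simp only [Fc_tmul, inner_smul_right]
    conv_lhs => rw [← b.sum_repr' x, ← b.sum_repr' y]
    simp_rw [TensorProduct.sum_tmul, TensorProduct.tmul_sum, TensorProduct.smul_tmul_smul]
  | add ψ₁ ψ₂ h1 h2 =>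
    have hFadd : ∀ x, Fc (ψ₁ + ψ₂) x = Fc ψ₁ x + Fc ψ₂ x := by intro x; simp [Fc]
    conv_lhs => rw [h1, h2]
    simp_rw [hFadd, inner_add_right, add_smul, Finset.sum_add_distrib]

lemma Fc_add (ψ₁ ψ₂ : H ⊗[ℂ] H) (x : H) : Fc (ψ₁ + ψ₂) x = Fc ψ₁ x + Fc ψ₂ x := by
  simp [Fc]

lemma Fc_neg (ψ : H ⊗[ℂ] H) (x : H) : Fc (-ψ) x = - Fc ψ x := by
  simp [Fc]

lemma Fc_pair (ψ : H ⊗[ℂ] H) (x y : H) :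
    ⟪y, Fc ψ x⟫_ℂ = ⟪x, Fc (TensorProduct.comm ℂ H H ψ) y⟫_ℂ := by
  induction ψ using TensorProduct.induction_on with
  | zero => simp [Fc]
  | tmul a b => simp [Fc_tmul, inner_smul_right]; ring
  | add ψ₁ ψ₂ h1 h2 => simp [Fc_add, map_add, inner_add_right, h1, h2]

end Aux

lemma lemA (n : ℕ) : ∀ (H : Type u) [NormedAddCommGroup H] [InnerProductSpace ℂ H]
    [FiniteDimensional ℂ H], finrank ℂ H = n → ∀ (F : H → H),
    (∀ x y : H, ⟪y, F x⟫_ℂ = -⟪x, F y⟫_ℂ) →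
    ∃ V : Submodule ℂ H, (∀ x ∈ V, F x ∈ Vᗮ) ∧ (∀ x ∈ Vᗮ, F x ∈ V) := by
  induction n using Nat.strong_induction_on with
  | _ n IH =>
  intro H _ _ _ hn F hF
  by_cases hF0 : ∀ x, F x = 0
  · refine ⟨⊥, ?_, ?_⟩
    · intro x hx; rw [Submodule.bot_orthogonal_eq_top]; trivial
    · intro x hx; rw [hF0]; exact Submodule.zero_mem _
  -- F is conjugate-linear
  have hadd : ∀ a b : H, F (a + b) = F a + F b := by
    intro a b
    refine ext_inner_left ℂ fun y => ?_
    rw [inner_add_right, hF (a + b) y, inner_add_left, hF a y, hF b y]; ring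
  have hsmul : ∀ (c : ℂ) (a : H), F (c • a) = (starRingEnd ℂ) c • F a := by
    intro c a
    refine ext_inner_left ℂ fun y => ?_
    rw [inner_smul_right, hF (c • a) y, inner_smul_left, hF a y]; ring
  -- the symmetric operator M = -F²
  let M : H →ₗ[ℂ] H :=
    { toFun := fun x => -F (F x)
      map_add' := by
        intro a b
        show -F (F (a + b)) = -F (F a) + -F (F b)
        rw [hadd, hadd]; abel
      map_smul' := by
        intro c a
        show -F (F (c • a)) = c • -F (F a)
        rw [hsmul, hsmul, Complex.conj_conj, smul_neg] }
  have hMkey : ∀ x y : H, ⟪x, M y⟫_ℂ = ⟪F y, F x⟫_ℂ := by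
    intro x y
    show ⟪x, -F (F y)⟫_ℂ = _
    rw [inner_neg_right, hF (F y) x]; ring
  have hMsym : M.IsSymmetric := by
    intro x y
    rw [← inner_conj_symm (M x) y, hMkey, hMkey]
    exact inner_conj_symm _ _
  -- find a nonzero eigenvalue
  obtain ⟨i, hi⟩ : ∃ i : Fin n, hMsym.eigenvalues hn i ≠ 0 := by
    by_contra hall
    push_neg at hall
    apply hF0
    have hM0 : M = 0 := by
      apply (hMsym.eigenvectorBasis hn).toBasis.ext
      intro i
      simp [hMsym.apply_eigenvectorBasis hn i, hall i]
    intro x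
    have : ⟪F x, F x⟫_ℂ = 0 := by rw [← hMkey, hM0]; simp
    exact inner_self_eq_zero.mp this
  set μ : ℝ := hMsym.eigenvalues hn i with hμ
  set u : H := hMsym.eigenvectorBasis hn i with hu
  have hMu : M u = (μ : ℂ) • u := hMsym.apply_eigenvectorBasis hn i
  have hunorm : ⟪u, u⟫_ℂ = 1 := by
    have h1 : ‖u‖ = 1 := (hMsym.eigenvectorBasis hn).orthonormal.1 i
    rw [inner_self_eq_norm_sq_to_K, h1]; norm_num
  set w : H := F u with hw
  have hww : ⟪w, w⟫_ℂ = (μ : ℂ) := by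
    rw [hw, ← hMkey, hMu, inner_smul_right, hunorm]; ring
  have hwne : w ≠ 0 := by
    intro h
    rw [h, inner_zero_left] at hww
    exact hi (by exact_mod_cast hww.symm)
  have hFw : F w = -((μ : ℂ) • u) := by
    have h1 : -F w = (μ : ℂ) • u := hMu
    exact neg_eq_iff_eq_neg.mp h1
  have huw : ⟪u, w⟫_ℂ = 0 := by
    have h1 := hF u u
    rw [← hw] at h1
    have h2 : ⟪u, w⟫_ℂ + ⟪u, w⟫_ℂ = 0 := by linear_combination h1
    exact add_self_eq_zero.mp h2
  -- the plane U = span {u, w} and its orthogonal complement W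
  set U : Submodule ℂ H := Submodule.span ℂ {u, w} with hU
  set W : Submodule ℂ H := Uᗮ with hW
  have mem_W : ∀ z : H, z ∈ W ↔ (⟪u, z⟫_ℂ = 0 ∧ ⟪w, z⟫_ℂ = 0) := by
    intro z
    constructor
    · intro hz
      exact ⟨(Submodule.mem_orthogonal U z).mp hz u (Submodule.subset_span (by simp)),
             (Submodule.mem_orthogonal U z).mp hz w (Submodule.subset_span (by simp))⟩
    · rintro ⟨h1, h2⟩
      rw [hW, Submodule.mem_orthogonal]
      intro a ha
      obtain ⟨c, d, rfl⟩ := Submodule.mem_span_pair.mp ha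
      rw [inner_add_left, inner_smul_left, inner_smul_left, h1, h2]; ring
  have hune : u ≠ 0 := by
    intro h
    rw [h, inner_zero_left] at hunorm
    exact one_ne_zero hunorm.symm
  have hFWmem : ∀ z ∈ W, F z ∈ W := by
    intro z hz
    obtain ⟨h1, h2⟩ := (mem_W z).mp hz
    rw [mem_W]
    constructor
    · rw [hF z u, ← hw, ← inner_conj_symm z w, h2]; simp
    · rw [hF z w, hFw, inner_neg_right, inner_smul_right, ← inner_conj_symm z u, h1]; simp
  -- dimension drops
  have hUfin : 0 < finrank ℂ U := by
    have : u ∈ U := Submodule.subset_span (by simp)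
    refine Module.finrank_pos_iff.mpr ⟨⟨u, this⟩, 0, fun h => hune ?_⟩
    simpa using congrArg (Subtype.val) h
  have hdim : finrank ℂ W < n := by
    have h := Submodule.finrank_add_finrank_orthogonal (K := U)
    rw [hn, ← hW] at h
    omega
  -- restrict F to W and apply the induction hypothesis
  let F' : W → W := fun z => ⟨F z, hFWmem z z.2⟩
  have hF' : ∀ x y : W, ⟪y, F' x⟫_ℂ = -⟪x, F' y⟫_ℂ := by
    intro x y
    exact hF (x : H) (y : H)
  obtain ⟨V', hV'1, hV'2⟩ := IH (finrank ℂ W) hdim W rfl F' hF'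
  set V : Submodule ℂ H := (ℂ ∙ u) ⊔ V'.map W.subtype with hV
  have memV : ∀ x : H, x ∈ V ↔ ∃ (c : ℂ) (m' : W), m' ∈ V' ∧ x = c • u + (m' : H) := by
    intro x
    constructor
    · intro hx
      obtain ⟨y, hy, z, hz, rfl⟩ := Submodule.mem_sup.mp hx
      obtain ⟨c, rfl⟩ := Submodule.mem_span_singleton.mp hy
      obtain ⟨m', hm', rfl⟩ := Submodule.mem_map.mp hz
      exact ⟨c, m', hm', rfl⟩
    · rintro ⟨c, m', hm', rfl⟩
      exact Submodule.add_mem_sup (Submodule.smul_mem _ c (Submodule.mem_span_singleton_self u))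
        (Submodule.mem_map_of_mem hm')
  have coe_inner_W : ∀ x y : W, ⟪x, y⟫_ℂ = ⟪(x : H), (y : H)⟫_ℂ := fun x y => rfl
  refine ⟨V, ?_, ?_⟩
  · -- F maps V into Vᗮ
    intro x hx
    obtain ⟨c, m', hm', rfl⟩ := (memV x).mp hx
    rw [Submodule.mem_orthogonal]
    intro a ha
    obtain ⟨d, m₂, hm₂, rfl⟩ := (memV a).mp ha
    have hFx : F (c • u + (m' : H)) = (starRingEnd ℂ) c • w + F (m' : H) := by
      rw [hadd, hsmul, hw]
    rw [hFx]
    have e1 : ⟪u, F (m' : H)⟫_ℂ = 0 := by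
      rw [hF (m' : H) u, ← hw, ← inner_conj_symm (m' : H) w, ((mem_W _).mp m'.2).2]
      simp
    have e2 : ⟪(m₂ : H), w⟫_ℂ = 0 := by
      rw [← inner_conj_symm (m₂ : H) w, ((mem_W _).mp m₂.2).2]; simp
    have e3 : ⟪(m₂ : H), F (m' : H)⟫_ℂ = 0 := by
      have h4 : F (m' : H) = ((F' m' : W) : H) := rfl
      rw [h4, ← coe_inner_W]
      exact (Submodule.mem_orthogonal _ _).mp (hV'1 m' hm') m₂ hm₂
    rw [inner_add_left, inner_add_right, inner_add_right, inner_smul_left, inner_smul_left,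
      inner_smul_right, inner_smul_right, huw, e1, e2, e3]
    ring
  · -- F maps Vᗮ into V
    intro z hz
    have hzV := (Submodule.mem_orthogonal V z).mp hz
    have hzu : ⟪u, z⟫_ℂ = 0 :=
      hzV u (Submodule.mem_sup_left (Submodule.mem_span_singleton_self u))
    have hzV' : ∀ m' : W, m' ∈ V' → ⟪(m' : H), z⟫_ℂ = 0 := fun m' hm' =>
      hzV _ (Submodule.mem_sup_right (Submodule.mem_map_of_mem hm'))
    have hμℂ : (μ : ℂ) ≠ 0 := by exact_mod_cast hi
    set k : ℂ := ⟪w, z⟫_ℂ / (μ : ℂ) with hk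
    set z₀ : H := z - k • w with hz₀
    have hz₀W : z₀ ∈ W := by
      rw [mem_W]
      constructor
      · rw [hz₀, inner_sub_right, inner_smul_right, hzu, huw]; ring
      · rw [hz₀, inner_sub_right, inner_smul_right, hww, hk]
        field_simp
        ring
    have hz₀V' : (⟨z₀, hz₀W⟩ : W) ∈ V'ᗮ := by
      rw [Submodule.mem_orthogonal]
      intro m' hm'
      rw [coe_inner_W]
      show ⟪(m' : H), z₀⟫_ℂ = 0
      have e2 : ⟪(m' : H), w⟫_ℂ = 0 := by
        rw [← inner_conj_symm (m' : H) w, ((mem_W _).mp m'.2).2]; simp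
      rw [hz₀, inner_sub_right, inner_smul_right, hzV' m' hm', e2]; ring
    have hzdec : z = z₀ + k • w := by rw [hz₀]; abel
    have hFz : F z = F z₀ + (starRingEnd ℂ) k • F w := by
      rw [hzdec, hadd, hsmul]
    rw [hFz]
    apply Submodule.add_mem
    · have h5 : F z₀ = ((F' ⟨z₀, hz₀W⟩ : W) : H) := rfl
      rw [h5]
      exact Submodule.mem_sup_right (Submodule.mem_map_of_mem (hV'2 _ hz₀V'))
    · rw [hFw]
      have h6 : (starRingEnd ℂ) k • -((μ : ℂ) • u) = ((starRingEnd ℂ) k * -(μ : ℂ)) • u := by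
        rw [smul_neg, smul_smul, mul_neg, neg_smul]
      rw [h6]
      exact Submodule.mem_sup_left (Submodule.smul_mem _ _ (Submodule.mem_span_singleton_self u))

/-- Existence of individuating projectors for any two-fermion state: for any nonzero
antisymmetric `ψ ∈ H ⊗ H` there are orthogonal projections `E₁, E₂` (symmetric
idempotents) with `E₁E₂ = 0` and `(E₁⊗E₂ + E₂⊗E₁)ψ = ψ`. -/
theorem individuating_projectors_exist
    (H : Type*) [NormedAddCommGroup H] [InnerProductSpace ℂ H] [FiniteDimensional ℂ H]
    (ψ : H ⊗[ℂ] H) (hψ : ψ ≠ 0)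
    (hanti : TensorProduct.comm ℂ H H ψ = -ψ) :
    ∃ E₁ E₂ : H →ₗ[ℂ] H,
      E₁.IsSymmetric ∧ E₂.IsSymmetric ∧ E₁ ∘ₗ E₁ = E₁ ∧ E₂ ∘ₗ E₂ = E₂ ∧
      E₁ ∘ₗ E₂ = 0 ∧
      (TensorProduct.map E₁ E₂ + TensorProduct.map E₂ E₁) ψ = ψ := by
  classical
  have hF : ∀ x y : H, ⟪y, Fc ψ x⟫_ℂ = -⟪x, Fc ψ y⟫_ℂ := by
    intro x y
    rw [Fc_pair ψ x y, hanti, Fc_neg, inner_neg_right]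
  obtain ⟨V, hV1, hV2⟩ := lemA (finrank ℂ H) H rfl (Fc ψ) hF
  let E₁ : H →ₗ[ℂ] H := (V.subtypeL ∘L V.orthogonalProjectionOnto : H →L[ℂ] H)
  let E₂ : H →ₗ[ℂ] H := (Vᗮ.subtypeL ∘L Vᗮ.orthogonalProjectionOnto : H →L[ℂ] H)
  have hE₁apply : ∀ x, E₁ x = ↑(V.orthogonalProjectionOnto x) := fun _ => rfl
  have hE₂apply : ∀ x, E₂ x = ↑(Vᗮ.orthogonalProjectionOnto x) := fun _ => rfl
  have hE₁mem : ∀ x ∈ V, E₁ x = x := by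
    intro x hx
    rw [hE₁apply]
    exact Submodule.starProjection_eq_self_iff.mpr hx
  have hE₂mem : ∀ x ∈ Vᗮ, E₂ x = x := by
    intro x hx
    rw [hE₂apply]
    exact Submodule.starProjection_eq_self_iff.mpr hx
  have hE₁zero : ∀ x ∈ Vᗮ, E₁ x = 0 := by
    intro x hx
    rw [hE₁apply, Submodule.orthogonalProjectionOnto_apply_of_mem_orthogonal hx]
    rfl
  have hE₂zero : ∀ x ∈ V, E₂ x = 0 := by
    intro x hx
    rw [hE₂apply, Submodule.orthogonalProjectionOnto_apply_of_mem_orthogonal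
      (Submodule.le_orthogonal_orthogonal V hx)]
    rfl
  refine ⟨E₁, E₂, Submodule.starProjection_isSymmetric V, Submodule.starProjection_isSymmetric Vᗮ,
    ?_, ?_, ?_, ?_⟩
  · ext x
    rw [LinearMap.comp_apply, hE₁apply x]
    exact hE₁mem _ (SetLike.coe_mem _)
  · ext x
    rw [LinearMap.comp_apply, hE₂apply x]
    exact hE₂mem _ (SetLike.coe_mem _)
  · ext x
    rw [LinearMap.comp_apply, hE₂apply x, LinearMap.zero_apply]
    exact hE₁zero _ (SetLike.coe_mem _)
  · -- the key computation, via an orthonormal basis adapted to V and Vᗮ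
    set n₁ := finrank ℂ V with hn₁
    set n₂ := finrank ℂ Vᗮ with hn₂
    set e := stdOrthonormalBasis ℂ V with he
    set f := stdOrthonormalBasis ℂ Vᗮ with hf
    set g : Fin n₁ ⊕ Fin n₂ → H := Sum.elim (fun i => ↑(e i)) (fun j => ↑(f j)) with hg
    have hgV : ∀ i, g (Sum.inl i) ∈ V := fun i => SetLike.coe_mem _
    have hgVc : ∀ j, g (Sum.inr j) ∈ Vᗮ := fun j => SetLike.coe_mem _
    have hon : Orthonormal ℂ g := by
      rw [orthonormal_iff_ite]
      intro p q
      rcases p with i | i <;> rcases q with j | j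
      · have h1 := orthonormal_iff_ite.mp e.orthonormal i j
        show ⟪((e i : V) : H), ((e j : V) : H)⟫_ℂ = _
        rw [← Submodule.coe_inner, h1]
        simp
      · show ⟪((e i : V) : H), ((f j : Vᗮ) : H)⟫_ℂ = _
        rw [(Submodule.mem_orthogonal V _).mp (SetLike.coe_mem (f j)) _ (SetLike.coe_mem (e i))]
        simp
      · show ⟪((f i : Vᗮ) : H), ((e j : V) : H)⟫_ℂ = _
        rw [← inner_conj_symm,
          (Submodule.mem_orthogonal V _).mp (SetLike.coe_mem (f i)) _ (SetLike.coe_mem (e j))]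
        simp
      · have h1 := orthonormal_iff_ite.mp f.orthonormal i j
        show ⟪((f i : Vᗮ) : H), ((f j : Vᗮ) : H)⟫_ℂ = _
        rw [← Submodule.coe_inner, h1]
        simp
    have hsp : ⊤ ≤ Submodule.span ℂ (Set.range g) := by
      rw [← Submodule.sup_orthogonal_of_hasOrthogonalProjection (K := V)]
      refine sup_le ?_ ?_
      · have h1 : V = Submodule.map V.subtype (Submodule.span ℂ (Set.range e)) := by
          rw [show Submodule.span ℂ (Set.range ⇑e) = ⊤ by
            rw [← e.coe_toBasis]; exact e.toBasis.span_eq]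
          simp
        rw [h1, Submodule.map_span]
        apply Submodule.span_mono
        rintro _ ⟨_, ⟨i, rfl⟩, rfl⟩
        exact ⟨Sum.inl i, rfl⟩
      · have h1 : Vᗮ = Submodule.map Vᗮ.subtype (Submodule.span ℂ (Set.range f)) := by
          rw [show Submodule.span ℂ (Set.range ⇑f) = ⊤ by
            rw [← f.coe_toBasis]; exact f.toBasis.span_eq]
          simp
        rw [h1, Submodule.map_span]
        apply Submodule.span_mono
        rintro _ ⟨_, ⟨j, rfl⟩, rfl⟩
        exact ⟨Sum.inr j, rfl⟩
    set gb : OrthonormalBasis (Fin n₁ ⊕ Fin n₂) ℂ H := OrthonormalBasis.mk hon hsp with hgb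
    have hgbg : ∀ p, gb p = g p := by
      intro p
      rw [hgb, OrthonormalBasis.coe_mk]
    have hexp := Fc_expand gb ψ
    conv_lhs => rw [hexp]
    conv_rhs => rw [hexp]
    rw [map_sum]
    refine Finset.sum_congr rfl fun p _ => ?_
    rw [map_sum]
    refine Finset.sum_congr rfl fun q _ => ?_
    rw [map_smul]
    rcases p with i | i <;> rcases q with j | j
    · have hc : ⟪gb (Sum.inl j), Fc ψ (gb (Sum.inl i))⟫_ℂ = 0 := by
        rw [hgbg, hgbg]
        exact (Submodule.mem_orthogonal V _).mp (hV1 _ (hgV i)) _ (hgV j)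
      rw [hc, zero_smul, zero_smul]
    · congr 1
      rw [LinearMap.add_apply, TensorProduct.map_tmul, TensorProduct.map_tmul,
        hgbg, hgbg, hE₁mem _ (hgV i), hE₂mem _ (hgVc j), hE₂zero _ (hgV i),
        hE₁zero _ (hgVc j)]
      simp
    · congr 1
      rw [LinearMap.add_apply, TensorProduct.map_tmul, TensorProduct.map_tmul,
        hgbg, hgbg, hE₁zero _ (hgVc i), hE₂zero _ (hgV j), hE₂mem _ (hgVc i),
        hE₁mem _ (hgV j)]
      simp
    · have hc : ⟪gb (Sum.inr j), Fc ψ (gb (Sum.inr i))⟫_ℂ = 0 := by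
        rw [hgbg, hgbg]
        exact (Submodule.mem_orthogonal Vᗮ _).mp
          (Submodule.le_orthogonal_orthogonal V (hV2 _ (hgVc i))) _ (hgVc j)
      rw [hc, zero_smul, zero_smul]
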